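/- Let N be a binary tree-child network on X, let A ⊆ X, and let x be a highest tree node of N with leaf-descendant set equal to A. If y ≠ x is another tree node with leaf-descendant set A, then one child of x is a reticulation r such that y is below x and y is above r. Consequently, x is the unique highest tree node with leaf-descendant set A. -/

import Mathlib

open scoped Classical
noncomputable section

/-- A (rooted binary phylogenetic) network datum: a finite directed graph on `ℕ`
with an optional leaf-labelling by `α`. -/
structure Net (α : Type) where
  verts : Finset ℕ
  edges : Finset (ℕ × ℕ)
  lab : ℕ → Option α

namespace Net

variable {α β : Type}

def Edge (N : Net α) (u v : ℕ) : Prop := (u, v) ∈ N.edges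

def indeg (N : Net α) (v : ℕ) : ℕ := (N.edges.filter fun e => e.2 = v).card
def outdeg (N : Net α) (v : ℕ) : ℕ := (N.edges.filter fun e => e.1 = v).card

/-- Reachability by directed paths. -/
def Reaches (N : Net α) : ℕ → ℕ → Prop := Relation.ReflTransGen N.Edge

def IsRoot (N : Net α) (v : ℕ) : Prop :=
  v ∈ N.verts ∧ N.indeg v = 0 ∧ N.outdeg v = 1
def IsLeaf (N : Net α) (v : ℕ) : Prop :=
  v ∈ N.verts ∧ N.indeg v = 1 ∧ N.outdeg v = 0
def IsTreeNode (N : Net α) (v : ℕ) : Prop :=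
  v ∈ N.verts ∧ N.indeg v = 1 ∧ N.outdeg v = 2
def IsRetic (N : Net α) (v : ℕ) : Prop :=
  v ∈ N.verts ∧ N.indeg v = 2 ∧ N.outdeg v = 1

/-- `N` is a rooted binary phylogenetic network on leaf set `α`. -/
def IsNetwork (N : Net α) : Prop :=
  (∀ e ∈ N.edges, e.1 ∈ N.verts ∧ e.2 ∈ N.verts) ∧
  (∀ u v, N.Edge u v → ¬ N.Reaches v u) ∧
  (∃! r, N.IsRoot r) ∧
  (∀ v ∈ N.verts, N.IsRoot v ∨ N.IsLeaf v ∨ N.IsTreeNode v ∨ N.IsRetic v) ∧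
  (∀ v, (∃ x, N.lab v = some x) ↔ N.IsLeaf v) ∧
  (∀ x : α, ∃! v, N.lab v = some x)

/-- Tree-child: every non-leaf node has a child that is a tree node or a leaf. -/
def TreeChild (N : Net α) : Prop :=
  N.IsNetwork ∧
  ∀ v ∈ N.verts, ¬ N.IsLeaf v → ∃ c, N.Edge v c ∧ (N.IsTreeNode c ∨ N.IsLeaf c)

def IsReticEdge (N : Net α) (e : ℕ × ℕ) : Prop := e ∈ N.edges ∧ N.IsRetic e.2

def deleteNode (N : Net α) (v : ℕ) : Net α :=
  ⟨N.verts.erase v, N.edges.filter fun e => e.1 ≠ v ∧ e.2 ≠ v, N.lab⟩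

def deleteEdge (N : Net α) (e : ℕ × ℕ) : Net α := ⟨N.verts, N.edges.erase e, N.lab⟩

def deleteEdges (N : Net α) (E : Finset (ℕ × ℕ)) : Net α := ⟨N.verts, N.edges \ E, N.lab⟩

/-- One step of cleaning up: delete an unlabelled outdegree-0 node, or suppress an
indegree-1 outdegree-1 node.  (In this simple-digraph encoding the parallel-edge rule
is subsumed: the inserted edge merges with an existing one, and the endpoints are then
suppressed by further steps.) -/
inductive CleanStep {α : Type} : Net α → Net α → Prop
  | delNode (N : Net α) (v : ℕ) (hv : v ∈ N.verts) (h0 : N.outdeg v = 0)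
      (hlab : N.lab v = none) : CleanStep N (N.deleteNode v)
  | suppress (N : Net α) (u v w : ℕ) (h1 : N.indeg v = 1) (h2 : N.outdeg v = 1)
      (hu : N.Edge u v) (hw : N.Edge v w) :
      CleanStep N ⟨N.verts.erase v,
        insert (u, w) (N.edges.filter fun e => e.1 ≠ v ∧ e.2 ≠ v), N.lab⟩

/-- `N` cleans up to `M`: apply clean-up steps until none applies. -/
def CleansTo (N M : Net α) : Prop :=
  Relation.ReflTransGen CleanStep N M ∧ ∀ M', ¬ CleanStep M M'

/-- Maximum subnetwork: delete one reticulation edge and clean up. -/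
def IsMaxSubnet (N M : Net α) : Prop :=
  ∃ e, N.IsReticEdge e ∧ CleansTo (N.deleteEdge e) M

/-- A reticulation edge is valid if deleting it and cleaning up removes exactly
2 nodes and 3 edges. -/
def ValidEdge (N : Net α) (e : ℕ × ℕ) : Prop :=
  N.IsReticEdge e ∧
  ∀ M, CleansTo (N.deleteEdge e) M →
    M.verts.card + 2 = N.verts.card ∧ M.edges.card + 3 = N.edges.card

/-- A valid network: all reticulation edges are valid. -/
def Valid (N : Net α) : Prop :=
  N.IsNetwork ∧ ∀ e, N.IsReticEdge e → N.ValidEdge e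

def Subgraph (M N : Net α) : Prop :=
  M.verts ⊆ N.verts ∧ M.edges ⊆ N.edges ∧ ∀ v ∈ M.verts, M.lab v = N.lab v

/-- One edge-subdivision step. -/
inductive SubdivStep {α : Type} : Net α → Net α → Prop
  | mk (N : Net α) (u v w : ℕ) (he : N.Edge u v) (hw : w ∉ N.verts) :
      SubdivStep N ⟨insert w N.verts,
        insert (u, w) (insert (w, v) (N.edges.erase (u, v))), N.lab⟩

/-- `M` is a subdivision of `N`. -/
def Subdivision (N M : Net α) : Prop := Relation.ReflTransGen SubdivStep N M

/-- Isomorphism of networks (preserving leaf labels). -/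
def Iso (N M : Net α) : Prop :=
  ∃ f : ℕ → ℕ, Set.BijOn f ↑N.verts ↑M.verts ∧
    (∀ u ∈ N.verts, ∀ v ∈ N.verts, (N.Edge u v ↔ M.Edge (f u) (f v))) ∧
    ∀ v ∈ N.verts, N.lab v = M.lab (f v)

/-- `N` displays `M`: some subgraph of `N` is (isomorphic to) a subdivision of `M`. -/
def Displays (N M : Net α) : Prop :=
  ∃ S M', Subgraph S N ∧ Subdivision M M' ∧ Iso M' S

/-- Leaf-descendant (label) set of a node. -/
def descSet (N : Net α) (v : ℕ) : Set α :=
  {x | ∃ l, N.lab l = some x ∧ N.Reaches v l}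

def Adj (N : Net α) (u v : ℕ) : Prop := N.Edge u v ∨ N.Edge v u

def ConnectedIn (N : Net α) (S : Finset ℕ) (u v : ℕ) : Prop :=
  Relation.ReflTransGen (fun a b => a ∈ S ∧ b ∈ S ∧ N.Adj a b) u v

/-- A biconnected vertex set: at least 3 nodes, connected, and no cut-node. -/
def BiconnectedSet (N : Net α) (S : Finset ℕ) : Prop :=
  3 ≤ S.card ∧ S ⊆ N.verts ∧
  (∀ u ∈ S, ∀ v ∈ S, N.ConnectedIn S u v) ∧
  ∀ c ∈ S, ∀ u ∈ S.erase c, ∀ v ∈ S.erase c, N.ConnectedIn (S.erase c) u v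

/-- A biconnected component: a maximal biconnected set. -/
def BlobSet (N : Net α) (S : Finset ℕ) : Prop :=
  N.BiconnectedSet S ∧ ∀ T, N.BiconnectedSet T → S ⊆ T → S = T

/-- A blob: either a biconnected component, or a tree node in no biconnected component. -/
def IsBlob (N : Net α) (S : Finset ℕ) : Prop :=
  N.BlobSet S ∨ ∃ t, S = {t} ∧ N.IsTreeNode t ∧ ∀ T, N.BlobSet T → t ∉ T

/-- The top node of a blob: the node of the blob from which all its nodes are reachable. -/
def TopNode (N : Net α) (S : Finset ℕ) (v : ℕ) : Prop :=
  v ∈ S ∧ ∀ u ∈ S, N.Reaches v u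

/-- The blob tree of `N` contains a blob node labelled `A`. -/
def HasBlobNode (N : Net α) (A : Set α) : Prop :=
  ∃ S v, N.IsBlob S ∧ N.TopNode S v ∧ N.descSet v = A

/-- The blob tree of `N` has an edge from blob node `A` to blob node `B`. -/
def BTEdge (N : Net α) (A B : Set α) : Prop :=
  ∃ S T u v, N.IsBlob S ∧ N.IsBlob T ∧ S ≠ T ∧ N.TopNode S u ∧ N.TopNode T v ∧
    N.descSet u = A ∧ N.descSet v = B ∧ ∃ w ∈ S, N.Edge w v

def reticCount (N : Net α) (S : Finset ℕ) : ℕ := (S.filter fun v => N.IsRetic v).card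

/-- `N` is a level-`k` network. -/
def IsLevel (N : Net α) (k : ℕ) : Prop :=
  (∀ S, N.BiconnectedSet S → N.reticCount S ≤ k) ∧
  (k = 0 ∨ ∃ S, N.BiconnectedSet S ∧ N.reticCount S = k)

/-- `M` is a maximum lower-level subnetwork (MLLS) of the level-`k` network `N`:
obtained by deleting exactly one valid reticulation edge from every level-`k`
biconnected component and cleaning up. -/
def IsMLLS (N : Net α) (k : ℕ) (M : Net α) : Prop :=
  ∃ E : Finset (ℕ × ℕ),
    (∀ e ∈ E, N.ValidEdge e) ∧
    (∀ S, N.BlobSet S → N.reticCount S = k → ∃! e, e ∈ E ∧ e.1 ∈ S ∧ e.2 ∈ S) ∧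
    (∀ e ∈ E, ∃ S, N.BlobSet S ∧ N.reticCount S = k ∧ e.1 ∈ S ∧ e.2 ∈ S) ∧
    CleansTo (N.deleteEdges E) M

/-- A cherry on two leaves. -/
def Cherry (N : Net α) (x y : ℕ) : Prop :=
  N.IsLeaf x ∧ N.IsLeaf y ∧ x ≠ y ∧ ∃ p, N.Edge p x ∧ N.Edge p y

/-- A reticulated cherry on two leaves, with the reticulation on `y`. -/
def RetCherry (N : Net α) (x y : ℕ) : Prop :=
  N.IsLeaf x ∧ N.IsLeaf y ∧
  ∃ p r, N.IsRetic r ∧ N.Edge r y ∧ N.Edge p x ∧ N.Edge p r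

/-- A reticulated cherry shape on non-reticulation nodes `x, y` with nodes
`px, py, gy` and edges `(px,x), (px,py), (gy,py), (py,y)`, `py` a reticulation. -/
def RetCherryShape (N : Net α) (x y px py gy : ℕ) : Prop :=
  ¬ N.IsRetic x ∧ ¬ N.IsRetic y ∧ N.IsRetic py ∧ px ≠ gy ∧
  N.Edge px x ∧ N.Edge px py ∧ N.Edge gy py ∧ N.Edge py y

def DirPath (N : Net α) (l : List ℕ) : Prop := l ≠ [] ∧ l.Chain' N.Edge

/-- `l` is the node sequence of an up-down path from `x` to `y`: a directed path from
an apex down to `x`, reversed, followed by a directed path from the apex down to `y`. -/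
def IsUpDownPath (N : Net α) (x y : ℕ) (l : List ℕ) : Prop :=
  ∃ p q : List ℕ, N.DirPath p ∧ N.DirPath q ∧ p.head? = q.head? ∧
    p.getLast? = some x ∧ q.getLast? = some y ∧ l = p.reverse ++ q.tail

/-- `n` is the shortest up-down distance between `x` and `y` (an up-down path with `n`
edges has `n+1` nodes). -/
def IsUpDownDist (N : Net α) (x y n : ℕ) : Prop :=
  (∃ l, N.IsUpDownPath x y l ∧ l.length = n + 1) ∧
  ∀ l, N.IsUpDownPath x y l → n + 1 ≤ l.length

def relabel (N : Net α) (f : α → β) : Net β :=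
  ⟨N.verts, N.edges, fun v => (N.lab v).map f⟩

/-- Collapse the pendant subnetwork rooted at `y` to a single leaf labelled `A`. -/
def collapseAt (N : Net α) (y : ℕ) (A : α) : Net α :=
  ⟨N.verts.filter (fun v => v = y ∨ ¬ N.Reaches y v),
   N.edges.filter (fun e => ¬ N.Reaches y e.1),
   fun v => if v = y then some A else N.lab v⟩

/-- Leaf-descendant set for networks whose leaves are labelled by sets of taxa. -/
def descUnion (N : Net (Set α)) (v : ℕ) : Set α :=
  {x | ∃ l s, N.lab l = some s ∧ x ∈ s ∧ N.Reaches v l}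

def HasBlobNodeU (N : Net (Set α)) (A : Set α) : Prop :=
  ∃ S v, N.IsBlob S ∧ N.TopNode S v ∧ N.descUnion v = A

/-- `M` is a subnetwork of `N`: displayed by `N` and not `N` itself. -/
def Subnet (N M : Net α) : Prop := M.IsNetwork ∧ N.Displays M ∧ ¬ N.Iso M

/-- Equality of sets of networks up to isomorphism. -/
def SetEquiv (S T : Set (Net α)) : Prop :=
  ∀ M, (∃ M₁ ∈ S, Iso M M₁) ↔ ∃ M₂ ∈ T, Iso M M₂

/-- The subnetworks of `N` of level at most `k - 1`. -/
def lowerSubnets (N : Net α) (k : ℕ) : Set (Net α) :=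
  {M | N.Subnet M ∧ ∃ j < k, M.IsLevel j}

/-- The set of all MLLSs of `N`. -/
def mllsSet (N : Net α) : Set (Net α) :=
  {M | ∃ k, N.IsLevel k ∧ N.IsMLLS k M}

end Net

namespace Net

variable {X : Type}

/-- Tree paths: directed paths all of whose non-initial nodes have indegree 1. -/
def TPR (N : Net X) : ℕ → ℕ → Prop :=
  Relation.ReflTransGen (fun a b => N.Edge a b ∧ N.indeg b = 1)

lemma TPR.reaches {N : Net X} {v l : ℕ} (h : N.TPR v l) : N.Reaches v l :=
  Relation.ReflTransGen.mono (fun a b (h : N.Edge a b ∧ N.indeg b = 1) => h.1) v l h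

lemma descSet_mono (N : Net X) {u v : ℕ} (h : N.Reaches u v) :
    N.descSet v ⊆ N.descSet u := by
  rintro a ⟨l, hl, hr⟩
  exact ⟨l, hl, h.trans hr⟩

lemma unique_parent (N : Net X) {w m p : ℕ} (h1 : N.indeg w = 1)
    (hm : N.Edge m w) (hp : N.Edge p w) : m = p := by
  have hm' : (m, w) ∈ N.edges.filter (fun e => e.2 = w) := Finset.mem_filter.2 ⟨hm, rfl⟩
  have hp' : (p, w) ∈ N.edges.filter (fun e => e.2 = w) := Finset.mem_filter.2 ⟨hp, rfl⟩
  have := Finset.card_le_one.1 (le_of_eq h1) _ hm' _ hp'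
  exact congrArg Prod.fst this

lemma reaches_parent (N : Net X) {u w p : ℕ} (h : N.Reaches u w) (hne : u ≠ w)
    (h1 : N.indeg w = 1) (hp : N.Edge p w) : N.Reaches u p := by
  rcases Relation.ReflTransGen.cases_tail h with h' | ⟨m, hm, hmw⟩
  · exact absurd h'.symm hne
  · exact (N.unique_parent h1 hmw hp) ▸ hm

lemma tpr_dichotomy (N : Net X) {v l : ℕ} (htpr : N.TPR v l) :
    ∀ u, N.Reaches u l → N.Reaches u v ∨ N.Reaches v u := by
  induction htpr with
  | refl => exact fun u hu => Or.inl hu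
  | @tail m l hvm step ih =>
    intro u hul
    by_cases he : u = l
    · subst he
      exact Or.inr (Relation.ReflTransGen.tail (TPR.reaches hvm) step.1)
    · exact ih u (N.reaches_parent hul he step.2 step.1)

lemma two_children (N : Net X) {x : ℕ} (h : N.outdeg x = 2) :
    ∃ c₁ c₂, c₁ ≠ c₂ ∧ N.Edge x c₁ ∧ N.Edge x c₂ ∧
      ∀ d, N.Edge x d → d = c₁ ∨ d = c₂ := by
  obtain ⟨e₁, e₂, hne, hset⟩ := Finset.card_eq_two.1 h
  have h₁ : e₁ ∈ N.edges.filter (fun e => e.1 = x) := by rw [hset]; simp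
  have h₂ : e₂ ∈ N.edges.filter (fun e => e.1 = x) := by rw [hset]; simp
  obtain ⟨he₁, hx₁⟩ := Finset.mem_filter.1 h₁
  obtain ⟨he₂, hx₂⟩ := Finset.mem_filter.1 h₂
  obtain ⟨a₁, b₁⟩ := e₁
  obtain ⟨a₂, b₂⟩ := e₂
  simp only at hx₁ hx₂
  obtain rfl : x = a₁ := hx₁.symm
  obtain rfl : x = a₂ := hx₂.symm
  refine ⟨b₁, b₂, ?_, he₁, he₂, ?_⟩
  · intro hb; exact hne (by rw [hb])
  · intro d hd
    have : (x, d) ∈ N.edges.filter (fun e => e.1 = x) := Finset.mem_filter.2 ⟨hd, rfl⟩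
    rw [hset] at this
    rcases Finset.mem_insert.1 this with h' | h'
    · exact Or.inl (congrArg Prod.snd h')
    · exact Or.inr (congrArg Prod.snd (Finset.mem_singleton.1 h'))

lemma indeg_one (N : Net X) (hN : N.TreeChild) {c p : ℕ} (hc : c ∈ N.verts)
    (hp : N.Edge p c) (hnr : ¬ N.IsRetic c) : N.indeg c = 1 := by
  rcases hN.1.2.2.2.1 c hc with h | h | h | h
  · exfalso
    have hmem : (p, c) ∈ N.edges.filter (fun e => e.2 = c) := Finset.mem_filter.2 ⟨hp, rfl⟩
    have hpos := Finset.card_pos.2 ⟨_, hmem⟩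
    have h0 := h.2.1
    unfold Net.indeg at h0
    omega
  · exact h.2.1
  · exact h.2.1
  · exact absurd h hnr

lemma exists_tpr_leaf_aux (N : Net X) (hN : N.TreeChild) :
    ∀ n (v : ℕ), v ∈ N.verts → (N.verts.filter (fun u => N.Reaches v u)).card ≤ n →
      ∃ l, N.IsLeaf l ∧ N.TPR v l := by
  intro n
  induction n with
  | zero =>
    intro v hv hc
    exfalso
    have : v ∈ N.verts.filter (fun u => N.Reaches v u) :=
      Finset.mem_filter.2 ⟨hv, Relation.ReflTransGen.refl⟩
    have := Finset.card_pos.2 ⟨_, this⟩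
    omega
  | succ n ih =>
    intro v hv hc
    by_cases hleaf : N.IsLeaf v
    · exact ⟨v, hleaf, Relation.ReflTransGen.refl⟩
    · obtain ⟨c, hec, hc'⟩ := hN.2 v hv hleaf
      have hcv : c ∈ N.verts := (hN.1.1 _ hec).2
      have hind : N.indeg c = 1 := by
        rcases hc' with h | h
        · exact h.2.1
        · exact h.2.1
      have hss : N.verts.filter (fun u => N.Reaches c u) ⊂
          N.verts.filter (fun u => N.Reaches v u) := by
        constructor
        · intro u hu
          obtain ⟨hu1, hu2⟩ := Finset.mem_filter.1 hu
          exact Finset.mem_filter.2 ⟨hu1, Relation.ReflTransGen.head hec hu2⟩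
        · intro hback
          have hvmem : v ∈ N.verts.filter (fun u => N.Reaches v u) :=
            Finset.mem_filter.2 ⟨hv, Relation.ReflTransGen.refl⟩
          have := (Finset.mem_filter.1 (hback hvmem)).2
          exact hN.1.2.1 v c hec this
      have hlt := Finset.card_lt_card hss
      obtain ⟨l, hl, htpr⟩ := ih c hcv (by omega)
      exact ⟨l, hl, Relation.ReflTransGen.head ⟨hec, hind⟩ htpr⟩

lemma exists_tpr_leaf (N : Net X) (hN : N.TreeChild) {v : ℕ} (hv : v ∈ N.verts) :
    ∃ l, N.IsLeaf l ∧ N.TPR v l :=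
  N.exists_tpr_leaf_aux hN _ v hv le_rfl

/-- Dichotomy: if `descSet u ⊆ descSet t` then `t` and `u` are comparable. -/
lemma reaches_dichotomy (N : Net X) (hN : N.TreeChild) (t u : ℕ) (hu : u ∈ N.verts)
    (hsub : N.descSet u ⊆ N.descSet t) : N.Reaches t u ∨ N.Reaches u t := by
  obtain ⟨l, hl, htpr⟩ := N.exists_tpr_leaf hN hu
  obtain ⟨a, ha⟩ := (hN.1.2.2.2.2.1 l).2 hl
  have hau : a ∈ N.descSet u := ⟨l, ha, htpr.reaches⟩
  obtain ⟨l', ha', hr'⟩ := hsub hau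
  obtain ⟨w, hw, huniq⟩ := hN.1.2.2.2.2.2 a
  have hll : l' = l := (huniq l' ha').trans (huniq l ha).symm
  subst hll
  exact N.tpr_dichotomy htpr t hr'

/-- A reticulation child of `x` cannot have the same leaf-descendant set as `x`. -/
lemma retic_full_contra (N : Net X) (hN : N.TreeChild) {x r : ℕ} (hr : N.IsRetic r)
    (hx : x ∈ N.verts) (hxr : N.Edge x r) (hdes : N.descSet r = N.descSet x) :
    False := by
  classical
  set U := N.verts.filter
    (fun u => N.Reaches u r ∧ ¬ N.Reaches r u ∧ N.descSet u ⊆ N.descSet r) with hU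
  have hxU : x ∈ U := Finset.mem_filter.2
    ⟨hx, Relation.ReflTransGen.single hxr, hN.1.2.1 x r hxr, by rw [hdes]⟩
  obtain ⟨u, huU, hmax⟩ := U.exists_max_image
    (fun u => (N.verts.filter (fun w => N.Reaches w u)).card) ⟨x, hxU⟩
  obtain ⟨huv, hur, hru, hsub⟩ := Finset.mem_filter.1 huU
  have hune : u ≠ r := fun h => hru (h ▸ Relation.ReflTransGen.refl)
  obtain ⟨w0, hw0, -⟩ := (Relation.ReflTransGen.cases_head hur).resolve_left hune
  have hnleaf : ¬ N.IsLeaf u := by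
    intro hl
    have hmem : (u, w0) ∈ N.edges.filter (fun e => e.1 = u) := Finset.mem_filter.2 ⟨hw0, rfl⟩
    have := Finset.card_pos.2 ⟨_, hmem⟩
    have h0 := hl.2.2
    unfold Net.outdeg at h0
    omega
  obtain ⟨w, hew, hw'⟩ := hN.2 u huv hnleaf
  have hwind : N.indeg w = 1 := by
    rcases hw' with h | h
    · exact h.2.1
    · exact h.2.1
  have hwv : w ∈ N.verts := (hN.1.1 _ hew).2
  have hwr : w ≠ r := by
    intro h
    rw [h] at hwind
    have := hr.2.1
    omega
  have hsubw : N.descSet w ⊆ N.descSet r :=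
    (N.descSet_mono (Relation.ReflTransGen.single hew)).trans hsub
  have hnrw : ¬ N.Reaches r w := by
    intro h
    exact hru (N.reaches_parent h (Ne.symm hwr) hwind hew)
  have hwrch : N.Reaches w r :=
    (N.reaches_dichotomy hN r w hwv hsubw).resolve_left hnrw
  have hwU : w ∈ U := Finset.mem_filter.2 ⟨hwv, hwrch, hnrw, hsubw⟩
  have hss : N.verts.filter (fun z => N.Reaches z u) ⊂
      N.verts.filter (fun z => N.Reaches z w) := by
    constructor
    · intro z hz
      obtain ⟨hz1, hz2⟩ := Finset.mem_filter.1 hz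
      exact Finset.mem_filter.2 ⟨hz1, hz2.tail hew⟩
    · intro hback
      have hwmem : w ∈ N.verts.filter (fun z => N.Reaches z w) :=
        Finset.mem_filter.2 ⟨hwv, Relation.ReflTransGen.refl⟩
      have := (Finset.mem_filter.1 (hback hwmem)).2
      exact hN.1.2.1 u w hew this
  exact absurd (hmax w hwU) (not_le.2 (Finset.card_lt_card hss))

end Net

/-- In a tree-child network, if `x` is a highest tree node with
leaf-descendant set `A`, then any other tree node `y` with leaf-descendant set `A`
is below `x` and above a reticulation child `r` of `x`; moreover `x` is the unique
highest such tree node. -/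
theorem highest_treeNode_with_descSet {X : Type} (N : Net X) (hN : N.TreeChild)
    (A : Set X) (x : ℕ) (hx : N.IsTreeNode x) (hdx : N.descSet x = A)
    (hhigh : ∀ y, N.IsTreeNode y → N.descSet y = A → y ≠ x → ¬ N.Reaches y x) :
    (∀ y, N.IsTreeNode y → N.descSet y = A → y ≠ x →
      ∃ r, N.Edge x r ∧ N.IsRetic r ∧ N.Reaches x y ∧ N.Reaches y r) ∧
    (∀ x', N.IsTreeNode x' → N.descSet x' = A →
      (∀ y, N.IsTreeNode y → N.descSet y = A → y ≠ x' → ¬ N.Reaches y x') →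
      x' = x) := by
  have hNet := hN.1
  have hacyc := hNet.2.1
  obtain ⟨c₁, c₂, hc12, he1, he2, hall⟩ := N.two_children hx.2.2
  have hnlx : ¬ N.IsLeaf x := by
    intro h
    have h0 := h.2.2
    have h2 := hx.2.2
    omega
  obtain ⟨c, hec, hctl⟩ := hN.2 x hx.1 hnlx
  have hcnr : ¬ N.IsRetic c := by
    intro h
    have h2 := h.2.1
    rcases hctl with h' | h'
    · have := h'.2.1; omega
    · have := h'.2.1; omega
  have hcv : c ∈ N.verts := (hNet.1 _ hec).2
  have K : ∀ y, N.IsTreeNode y → N.descSet y = A → y ≠ x →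
      ∀ d, N.Edge x d → ¬ N.IsRetic d → N.Reaches d y := by
    intro y hy hdy hyx d hed hdnr
    have hdv : d ∈ N.verts := (hNet.1 _ hed).2
    have hsub : N.descSet d ⊆ N.descSet y := by
      rw [hdy, ← hdx]
      exact N.descSet_mono (Relation.ReflTransGen.single hed)
    rcases N.reaches_dichotomy hN y d hdv hsub with h | h
    · by_cases hyd : y = d
      · exact hyd ▸ Relation.ReflTransGen.refl
      · exact absurd (N.reaches_parent h hyd (N.indeg_one hN hdv hed hdnr) hed)
          (hhigh y hy hdy hyx)
    · exact h
  have main1 : ∀ y, N.IsTreeNode y → N.descSet y = A → y ≠ x →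
      ∃ r, N.Edge x r ∧ N.IsRetic r ∧ N.Reaches x y ∧ N.Reaches y r := by
    intro y hy hdy hyx
    obtain ⟨r, her, hrne⟩ : ∃ r, N.Edge x r ∧ r ≠ c := by
      rcases hall c hec with h | h
      · exact ⟨c₂, he2, fun hq => hc12 (h ▸ hq).symm⟩
      · exact ⟨c₁, he1, fun hq => hc12 (hq.trans h)⟩
    have hrv : r ∈ N.verts := (hNet.1 _ her).2
    have hcy := K y hy hdy hyx c hec hcnr
    have hrretic : N.IsRetic r := by
      by_contra hrnr
      have hsub2 : N.descSet r ⊆ N.descSet c := by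
        have h1 : N.descSet r ⊆ A := by
          rw [← hdx]
          exact N.descSet_mono (Relation.ReflTransGen.single her)
        have h2 : A ⊆ N.descSet c := by
          rw [← hdy]
          exact N.descSet_mono hcy
        exact h1.trans h2
      rcases N.reaches_dichotomy hN c r hrv hsub2 with h | h
      · exact hacyc x c hec
          (N.reaches_parent h (Ne.symm hrne) (N.indeg_one hN hrv her hrnr) her)
      · exact hacyc x r her
          (N.reaches_parent h hrne (N.indeg_one hN hcv hec hcnr) hec)
    have hxy : N.Reaches x y := Relation.ReflTransGen.head hec hcy
    have hsubr : N.descSet r ⊆ N.descSet y := by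
      rw [hdy, ← hdx]
      exact N.descSet_mono (Relation.ReflTransGen.single her)
    rcases N.reaches_dichotomy hN y r hrv hsubr with h | h
    · exact ⟨r, her, hrretic, hxy, h⟩
    · exfalso
      apply N.retic_full_contra hN hrretic hx.1 her
      apply Set.Subset.antisymm
      · exact N.descSet_mono (Relation.ReflTransGen.single her)
      · rw [hdx, ← hdy]
        exact N.descSet_mono h
  refine ⟨main1, ?_⟩
  intro x' hx' hdx' hhigh'
  by_contra hne
  obtain ⟨r, -, -, hxy, -⟩ := main1 x' hx' hdx' hne
  exact hhigh' x hx hdx (Ne.symm hne) hxy
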